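/- Let R ∈ SO(p) be an involution and let I_σ be a diagonal matrix with diagonal entries ±1 having exactly m entries equal to −1, with m even and 0 < m < p. Let l₋ = dim(E₁(R) ∩ E_{−1}(I_σ)) and l₊ = dim(E_{−1}(R) ∩ E₁(I_σ)). Then l₋ − l₊ = m − dim(E_{−1}(R)). -/

import Mathlib

open Matrix


section Aux

variable {E : Type*} [NormedAddCommGroup E] [InnerProductSpace ℝ E] [FiniteDimensional ℝ E]

/-- For a symmetric involution, the `-1` eigenspace is the orthogonal complement of the
`1` eigenspace. -/
lemma eigenspace_neg_one_eq_orthogonal (T : E →ₗ[ℝ] E) (hsym : T.IsSymmetric)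
    (hinv : ∀ x, T (T x) = x) :
    Module.End.eigenspace T (-1) = (Module.End.eigenspace T 1)ᗮ := by
  have hle : Module.End.eigenspace T (-1) ≤ (Module.End.eigenspace T 1)ᗮ := by
    intro x hx
    rw [Submodule.mem_orthogonal]
    intro y hy
    rw [Module.End.mem_eigenspace_iff] at hx hy
    have h1 : inner ℝ (T y) x = (inner ℝ y (T x) : ℝ) := hsym y x
    rw [hx, hy] at h1
    simp only [one_smul, inner_smul_right] at h1
    linarith
  apply le_antisymm hle
  intro x hx
  have ha : (2⁻¹ : ℝ) • (x + T x) ∈ Module.End.eigenspace T 1 := by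
    rw [Module.End.mem_eigenspace_iff]
    simp [map_add, hinv x, one_smul, add_comm]
  have hb : (2⁻¹ : ℝ) • (x - T x) ∈ Module.End.eigenspace T (-1) := by
    rw [Module.End.mem_eigenspace_iff]
    have h : T (x - T x) = -(x - T x) := by rw [map_sub, hinv x]; abel
    rw [_root_.map_smul, h]
    module
  have hxeq : x = (2⁻¹ : ℝ) • (x + T x) + (2⁻¹ : ℝ) • (x - T x) := by
    rw [← smul_add]
    rw [show x + T x + (x - T x) = (2:ℝ) • x by rw [two_smul]; abel]
    rw [smul_smul]; norm_num
  have hbo : (2⁻¹ : ℝ) • (x - T x) ∈ (Module.End.eigenspace T 1)ᗮ := hle hb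
  have hao : (2⁻¹ : ℝ) • (x + T x) ∈ (Module.End.eigenspace T 1)ᗮ := by
    have heq : (2⁻¹ : ℝ) • (x + T x) = x - (2⁻¹ : ℝ) • (x - T x) := by
      rw [eq_sub_iff_add_eq, ← hxeq]
    rw [heq]
    exact Submodule.sub_mem _ hx hbo
  have : (2⁻¹ : ℝ) • (x + T x) ∈ Module.End.eigenspace T 1 ⊓ (Module.End.eigenspace T 1)ᗮ :=
    ⟨ha, hao⟩
  rw [Submodule.inf_orthogonal_eq_bot, Submodule.mem_bot] at this
  rw [hxeq, this, zero_add]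
  exact hb

end Aux

lemma toEuclideanLin_comp_apply {p : ℕ} (M N : Matrix (Fin p) (Fin p) ℝ)
    (x : EuclideanSpace ℝ (Fin p)) :
    Matrix.toEuclideanLin M (Matrix.toEuclideanLin N x) = Matrix.toEuclideanLin (M * N) x := by
  simp [Matrix.toEuclideanLin_apply, Matrix.mulVec_mulVec]

lemma mem_diag_eigenspace_iff {p : ℕ} (σ : Fin p → ℝ) (hσ : ∀ i, σ i = 1 ∨ σ i = -1)
    (x : EuclideanSpace ℝ (Fin p)) :
    x ∈ Module.End.eigenspace (Matrix.toEuclideanLin (Matrix.diagonal σ)) (-1) ↔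
      ∀ i, σ i ≠ -1 → x i = 0 := by
  rw [Module.End.mem_eigenspace_iff]
  have happ : ∀ i, (Matrix.toEuclideanLin (Matrix.diagonal σ) x) i = σ i * x i := by
    intro i
    simp [Matrix.toEuclideanLin_apply, Matrix.mulVec_diagonal]
  constructor
  · intro h i hi
    rcases hσ i with h1 | h1
    · have h2 : σ i * x i = -x i := by
        rw [← happ i, h]
        simp
      rw [h1, one_mul] at h2
      linarith
    · exact absurd h1 hi
  · intro h
    ext i
    rcases hσ i with h1 | h1
    · have hx : x i = 0 := h i (by rw [h1]; norm_num)
      simp [happ i, hx]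
    · simp [happ i, h1]

lemma finrank_diag_eigenspace {p : ℕ} (σ : Fin p → ℝ) (hσ : ∀ i, σ i = 1 ∨ σ i = -1) :
    Module.finrank ℝ
        ↥(Module.End.eigenspace (Matrix.toEuclideanLin (Matrix.diagonal σ)) (-1))
      = (Finset.univ.filter (fun i => σ i = -1)).card := by
  classical
  let e : ↥(Module.End.eigenspace (Matrix.toEuclideanLin (Matrix.diagonal σ)) (-1)) ≃ₗ[ℝ]
      ({i : Fin p // σ i = -1} → ℝ) :=
    { toFun := fun x j => (x : EuclideanSpace ℝ (Fin p)) j.1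
      map_add' := fun x y => rfl
      map_smul' := fun c x => rfl
      invFun := fun y => ⟨WithLp.toLp 2 (fun i => if h : σ i = -1 then y ⟨i, h⟩ else 0 : Fin p → ℝ),
        by
          rw [mem_diag_eigenspace_iff σ hσ]
          intro i hi
          simp [hi]⟩
      left_inv := fun x => by
        ext i
        by_cases h : σ i = -1
        · simp [h]
        · simp [h, ((mem_diag_eigenspace_iff σ hσ _).mp x.2 i h).symm]
      right_inv := fun y => by
        ext j
        simp [j.2] }
  rw [e.finrank_eq]
  rw [Module.finrank_fintype_fun_eq_card]
  exact Fintype.card_subtype _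

/-- Let `R ∈ SO(p)` be an involution and `I_σ` a diagonal sign matrix with exactly `m`
entries equal to `−1`, `m` even, `0 < m < p`.  With
`l₋ = dim(E₁(R) ∩ E_{−1}(I_σ))` and `l₊ = dim(E_{−1}(R) ∩ E₁(I_σ))`, one has
`l₋ − l₊ = m − dim E_{−1}(R)`. -/
theorem sign_change_eigenspace_dim_relation (p m : ℕ) (hm : 0 < m) (hmp : m < p)
    (hmeven : Even m)
    (R : Matrix (Fin p) (Fin p) ℝ)
    (horth : Rᵀ * R = 1) (hdet : R.det = 1) (hinv : R * R = 1)
    (σ : Fin p → ℝ) (hσ : ∀ i, σ i = 1 ∨ σ i = -1)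
    (hcard : (Finset.univ.filter (fun i => σ i = -1)).card = m) :
    (Module.finrank ℝ ↥(Module.End.eigenspace (Matrix.toEuclideanLin R) 1 ⊓
        Module.End.eigenspace (Matrix.toEuclideanLin (Matrix.diagonal σ)) (-1)) : ℤ)
      - (Module.finrank ℝ ↥(Module.End.eigenspace (Matrix.toEuclideanLin R) (-1) ⊓
          Module.End.eigenspace (Matrix.toEuclideanLin (Matrix.diagonal σ)) 1) : ℤ)
      = (m : ℤ) - (Module.finrank ℝ
          ↥(Module.End.eigenspace (Matrix.toEuclideanLin R) (-1)) : ℤ) := by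
  classical
  set T := Matrix.toEuclideanLin R with hT
  set S := Matrix.toEuclideanLin (Matrix.diagonal σ) with hS
  -- R is symmetric
  have hRsymm : Rᵀ = R := by
    calc Rᵀ = Rᵀ * (R * R) := by rw [hinv, mul_one]
      _ = (Rᵀ * R) * R := by rw [mul_assoc]
      _ = R := by rw [horth, one_mul]
  have hRherm : R.IsHermitian := by
    have : Rᴴ = Rᵀ := by
      ext i j
      simp [Matrix.conjTranspose_apply, Matrix.transpose_apply]
    rw [Matrix.IsHermitian, this, hRsymm]
  have hSherm : (Matrix.diagonal σ).IsHermitian := Matrix.isHermitian_diagonal σ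
  have hTsym : T.IsSymmetric := Matrix.isHermitian_iff_isSymmetric.mp hRherm
  have hSsym : S.IsSymmetric := Matrix.isHermitian_iff_isSymmetric.mp hSherm
  have hone : ∀ x : EuclideanSpace ℝ (Fin p), Matrix.toEuclideanLin (1 : Matrix (Fin p) (Fin p) ℝ) x = x := by
    intro x
    simp [Matrix.toEuclideanLin_apply]
  have hTinv : ∀ x, T (T x) = x := by
    intro x
    rw [hT, toEuclideanLin_comp_apply, hinv, hone]
  have hdiaginv : Matrix.diagonal σ * Matrix.diagonal σ = 1 := by
    rw [Matrix.diagonal_mul_diagonal]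
    ext i j
    by_cases hij : i = j
    · subst hij
      rcases hσ i with h | h <;> simp [Matrix.diagonal_apply_eq, h, Matrix.one_apply]
    · simp [Matrix.diagonal_apply_ne _ hij, Matrix.one_apply, hij]
  have hSinv : ∀ x, S (S x) = x := by
    intro x
    rw [hS, toEuclideanLin_comp_apply, hdiaginv, hone]
  -- eigenspaces as orthogonal complements
  set A := Module.End.eigenspace T 1
  set A' := Module.End.eigenspace T (-1)
  set B := Module.End.eigenspace S 1
  set B' := Module.End.eigenspace S (-1)
  have h1 : A' = Aᗮ := eigenspace_neg_one_eq_orthogonal T hTsym hTinv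
  have h2 : B' = Bᗮ := eigenspace_neg_one_eq_orthogonal S hSsym hSinv
  have hA : A = A'ᗮ := by rw [h1, Submodule.orthogonal_orthogonal]
  have hB : B = B'ᗮ := by rw [h2, Submodule.orthogonal_orthogonal]
  have key : A ⊓ B' = (A' ⊔ B)ᗮ := by
    rw [hA, h2, Submodule.inf_orthogonal]
  have e1 : Module.finrank ℝ ↥(A' ⊔ B) + Module.finrank ℝ ↥(A ⊓ B') = p := by
    rw [key]
    rw [Submodule.finrank_add_finrank_orthogonal]
    exact finrank_euclideanSpace_fin
  have e2 : Module.finrank ℝ ↥(A' ⊔ B) + Module.finrank ℝ ↥(A' ⊓ B)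
      = Module.finrank ℝ ↥A' + Module.finrank ℝ ↥B :=
    Submodule.finrank_sup_add_finrank_inf_eq A' B
  have e3 : Module.finrank ℝ ↥B' + Module.finrank ℝ ↥B = p := by
    rw [h2, add_comm, Submodule.finrank_add_finrank_orthogonal]
    exact finrank_euclideanSpace_fin
  have e4 : Module.finrank ℝ ↥B' = m := by
    rw [show B' = Module.End.eigenspace S (-1) from rfl, hS]
    rw [finrank_diag_eigenspace σ hσ, hcard]
  have e5 : Module.finrank ℝ ↥A' ≤ p := by
    have := Submodule.finrank_le A'
    simpa [finrank_euclideanSpace_fin] using this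
  omega
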